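/- Let q be a power of an odd prime with q ≡ 1 (mod 3) and F = 𝔽_q. For all b, c, r, s ∈ F with b ≠ c, the points (0, b, r) and (0, c, s) are at graph distance exactly 4 in the graph R. -/

import Mathlib

/-- Vertices: points (left component) and lines (right component), each a triple over `F`. -/
abbrev Vtx (F : Type) := (F × F × F) ⊕ (F × F × F)

/-- Adjacency for the graph `Γ_F(p₁ℓ₁, g(p₁,p₂,ℓ₁))`: a point `(p₁,p₂,p₃)` and a line
`[ℓ₁,ℓ₂,ℓ₃]` are adjacent iff `p₂+ℓ₂ = p₁ℓ₁` and `p₃+ℓ₃ = g(p₁,p₂,ℓ₁)`. -/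
def gammaAdj (F : Type) [Field F] (g : F → F → F → F) : Vtx F → Vtx F → Prop
  | Sum.inl p, Sum.inr l => p.2.1 + l.2.1 = p.1 * l.1 ∧ p.2.2 + l.2.2 = g p.1 p.2.1 l.1
  | Sum.inr l, Sum.inl p => p.2.1 + l.2.1 = p.1 * l.1 ∧ p.2.2 + l.2.2 = g p.1 p.2.1 l.1
  | _, _ => False

/-- The bipartite graph `Γ_F(p₁ℓ₁, g(p₁,p₂,ℓ₁))`. -/
def Gamma (F : Type) [Field F] (g : F → F → F → F) : SimpleGraph (Vtx F) where
  Adj := gammaAdj F g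
  symm := by
    constructor
    intro v w h
    match v, w with
    | Sum.inl p, Sum.inr l => exact h
    | Sum.inr l, Sum.inl p => exact h
  loopless := by
    constructor
    intro v h
    match v with
    | Sum.inl p => exact h
    | Sum.inr l => exact h

/-- The graph `R = Γ_F(p₁ℓ₁, p₁p₂ℓ₁(p₁+p₂+p₁p₂))`. -/
def RGraph (F : Type) [Field F] : SimpleGraph (Vtx F) :=
  Gamma F (fun p1 p2 l1 => p1 * p2 * l1 * (p1 + p2 + p1 * p2))

open Polynomial in
lemma exists_good_aux (F : Type) [Field F] [Fintype F] (h5 : 5 ≤ Fintype.card F) (t : F) :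
    ∃ a : F, a ≠ 0 ∧ a + 1 ≠ 0 ∧ a ^ 2 ≠ t := by
  classical
  have m1 : (X : F[X]).Monic := monic_X
  have m2 : ((X : F[X]) + 1).Monic := by simpa using monic_X_add_C (1 : F)
  have m3 : ((X : F[X]) ^ 2 - C t).Monic := monic_X_pow_sub_C t two_ne_zero
  have mf : ((X : F[X]) * (X + 1) * (X ^ 2 - C t)).Monic := (m1.mul m2).mul m3
  have hdeg : ((X : F[X]) * (X + 1) * (X ^ 2 - C t)).natDegree = 4 := by
    rw [(m1.mul m2).natDegree_mul m3, m1.natDegree_mul m2]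
    simp [natDegree_X_pow_sub_C]
    norm_num [show ((X : F[X]) + 1) = X + C 1 by simp, natDegree_X_add_C]
  obtain ⟨a, ha⟩ := Polynomial.exists_eval_ne_zero_of_natDegree_lt_card
    ((X : F[X]) * (X + 1) * (X ^ 2 - C t)) mf.ne_zero (by
      rw [hdeg, Cardinal.mk_fintype]
      exact_mod_cast lt_of_lt_of_le (by norm_num) h5)
  simp only [Polynomial.eval_mul, Polynomial.eval_add, Polynomial.eval_pow,
    Polynomial.eval_sub, Polynomial.eval_X, Polynomial.eval_C,
    Polynomial.eval_one, mul_ne_zero_iff] at ha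
  exact ⟨a, ha.1.1, ha.1.2, sub_ne_zero.mp ha.2⟩

lemma no_short_walk_aux (F : Type) [Field F] (b c r s : F) (hbc : b ≠ c)
    (w : (RGraph F).Walk (Sum.inl (0, b, r)) (Sum.inl (0, c, s))) : ¬ w.length < 4 := by
  intro hlt
  cases w with
  | nil => exact hbc rfl
  | cons h1 w1 =>
    rename_i x1
    obtain (x1 | l1) := x1
    · exact h1
    · cases w1 with
      | cons h2 w2 =>
        rename_i x2
        obtain (p | x2) := x2
        · cases w2 with
          | nil =>
            obtain ⟨e1, -⟩ := h1
            obtain ⟨e2, -⟩ := h2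
            exact hbc (by linear_combination e1 - e2)
          | cons h3 w3 =>
            rename_i x3
            obtain (x3 | m) := x3
            · exact h3
            · cases w3 with
              | cons h4 w4 =>
                simp only [SimpleGraph.Walk.length_cons] at hlt
                rename_i x4
                obtain (x4 | x4) := x4
                · omega
                · exact h4
        · exact h2

lemma walk4_aux (F : Type) [Field F] (b c r s p1 p2 : F) (hp1 : p1 ≠ 0)
    (hkey : p2 * (p1 + p2 + p1 * p2) * (b - c) = r - s) :
    ∃ w : (RGraph F).Walk (Sum.inl (0, b, r)) (Sum.inl (0, c, s)), w.length = 4 := by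
  have h1 : (RGraph F).Adj (Sum.inl (0, b, r)) (Sum.inr ((p2 - b) / p1, -b, -r)) :=
    ⟨by ring, by ring⟩
  have h2 : (RGraph F).Adj (Sum.inr ((p2 - b) / p1, -b, -r))
      (Sum.inl (p1, p2, r + p1 * p2 * ((p2 - b) / p1) * (p1 + p2 + p1 * p2))) :=
    ⟨by field_simp; all_goals ring, by ring⟩
  have h3 : (RGraph F).Adj
      (Sum.inl (p1, p2, r + p1 * p2 * ((p2 - b) / p1) * (p1 + p2 + p1 * p2)))
      (Sum.inr ((p2 - c) / p1, -c, -s)) :=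
    ⟨by field_simp; all_goals ring, by field_simp; linear_combination (-1) * hkey⟩
  have h4 : (RGraph F).Adj (Sum.inr ((p2 - c) / p1, -c, -s)) (Sum.inl (0, c, s)) :=
    ⟨by ring, by ring⟩
  exact ⟨.cons h1 (.cons h2 (.cons h3 (.cons h4 .nil))), rfl⟩

/-- Let `q` be a power of an odd prime with `q ≡ 1 (mod 3)` and `F = 𝔽_q`. For all
`b, c, r, s ∈ F` with `b ≠ c`, the points `(0,b,r)` and `(0,c,s)` are at graph distance
exactly 4 in `R`. -/
theorem dist_points_eq_four (q p e : ℕ) (hp : p.Prime) (hodd : Odd p) (he : 1 ≤ e)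
    (hq : q = p ^ e) (hmod : q % 3 = 1) (F : Type) [Field F] [Fintype F]
    (hcard : Fintype.card F = q) (b c r s : F) (hbc : b ≠ c) :
    (RGraph F).dist (Sum.inl (0, b, r)) (Sum.inl (0, c, s)) = 4 := by
  -- cardinality bound
  have hp3 : 3 ≤ p := by
    have := hp.two_le
    rcases hodd with ⟨k, hk⟩
    omega
  have hq3 : 3 ≤ q := by
    calc 3 ≤ p := hp3
    _ ≤ p ^ e := Nat.le_self_pow (by omega) p
    _ = q := hq.symm
  have hqodd : q % 2 = 1 := by
    rw [hq]
    rcases (hodd.pow : Odd (p ^ e)) with ⟨k, hk⟩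
    omega
  have h5 : 5 ≤ Fintype.card F := by
    rw [hcard]; omega
  -- choose p1, p2
  have hbc' : b - c ≠ 0 := sub_ne_zero.mpr hbc
  obtain ⟨p1, p2, hp1, hkey⟩ :
      ∃ p1 p2 : F, p1 ≠ 0 ∧ p2 * (p1 + p2 + p1 * p2) * (b - c) = r - s := by
    by_cases hrs : r - s = 0
    · exact ⟨1, 0, one_ne_zero, by rw [hrs]; ring⟩
    · obtain ⟨a, ha0, ha1, hat⟩ := exists_good_aux F h5 ((r - s) / (b - c))
      refine ⟨((r - s) / (b - c) - a ^ 2) / (a * (a + 1)), a, ?_, ?_⟩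
      · exact div_ne_zero (sub_ne_zero.mpr (fun h => hat h.symm)) (mul_ne_zero ha0 ha1)
      · field_simp
        ring
  obtain ⟨w, hw⟩ := walk4_aux F b c r s p1 p2 hp1 hkey
  have hle : (RGraph F).dist (Sum.inl (0, b, r)) (Sum.inl (0, c, s)) ≤ 4 :=
    hw ▸ SimpleGraph.dist_le w
  have hreach : (RGraph F).Reachable (Sum.inl (0, b, r)) (Sum.inl (0, c, s)) := ⟨w⟩
  obtain ⟨w', hw'⟩ := hreach.exists_walk_length_eq_dist
  have := no_short_walk_aux F b c r s hbc w'
  omega
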